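/- arXiv:2103.09452 — 4 statements merged into one kernel-verified Lean document; each statement's English description precedes it below -/
import Mathlib

section
/- If ‖(Ω + A)^{-1}‖₂ < 1 / (‖A - Ω‖₂ + 2‖B‖₂), x* solves the GAVE A x - B |x| = b, and x^(k) satisfies the NMN iteration (Ω + A) x^(k+1) = (Ω - A) x^(k) + 2(B |x^(k)| + b), then ‖x^(k+1) - x*‖₂ ≤ c ‖x^(k) - x*‖₂ for some constant c < 1 independent of k; consequently x^(k) converges to x* from any initial vector. -/
open Matrix Filter
noncomputable def spec {n : ℕ} (A : Matrix (Fin n) (Fin n) ℝ) : ℝ :=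
  ‖Matrix.toEuclideanCLM (𝕜 := ℝ) A‖
noncomputable def enorm2 {n : ℕ} (x : Fin n → ℝ) : ℝ :=
  ‖(WithLp.equiv 2 (Fin n → ℝ)).symm x‖
def vabs {n : ℕ} (x : Fin n → ℝ) : Fin n → ℝ := fun i => |x i|
def entAbs {n : ℕ} (A : Matrix (Fin n) (Fin n) ℝ) : Matrix (Fin n) (Fin n) ℝ :=
  fun i j => |A i j|
def compMat {n : ℕ} (A : Matrix (Fin n) (Fin n) ℝ) : Matrix (Fin n) (Fin n) ℝ :=
  fun i j => if i = j then |A i j| else -|A i j|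
noncomputable def specRad {n : ℕ} (A : Matrix (Fin n) (Fin n) ℝ) : ENNReal :=
  spectralRadius ℂ (A.map Complex.ofReal)

lemma enorm2_mulVec_le {n : ℕ} (A : Matrix (Fin n) (Fin n) ℝ) (v : Fin n → ℝ) :
    enorm2 (A.mulVec v) ≤ spec A * enorm2 v := by
  have := (Matrix.toEuclideanCLM (𝕜 := ℝ) A).le_opNorm ((WithLp.equiv 2 (Fin n → ℝ)).symm v)
  rwa [WithLp.equiv_symm_apply, Matrix.toEuclideanCLM_toLp] at this

lemma enorm2_add_le {n : ℕ} (u v : Fin n → ℝ) : enorm2 (u + v) ≤ enorm2 u + enorm2 v := by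
  simp only [enorm2, WithLp.equiv_symm_apply, WithLp.toLp_add]; exact norm_add_le _ _

lemma enorm2_smul {n : ℕ} (c : ℝ) (v : Fin n → ℝ) : enorm2 (c • v) = |c| * enorm2 v := by
  simp [enorm2, WithLp.equiv_symm_apply, WithLp.toLp_smul, norm_smul]

lemma enorm2_neg {n : ℕ} (v : Fin n → ℝ) : enorm2 (-v) = enorm2 v := by
  simp [enorm2, WithLp.equiv_symm_apply, WithLp.toLp_neg]

lemma enorm2_vabs_sub {n : ℕ} (u v : Fin n → ℝ) :
    enorm2 (vabs u - vabs v) ≤ enorm2 (u - v) := by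
  simp only [enorm2, EuclideanSpace.norm_eq, WithLp.equiv_symm_apply, PiLp.toLp_apply]
  apply Real.sqrt_le_sqrt
  apply Finset.sum_le_sum
  intro i _
  have h : ‖(vabs u - vabs v) i‖ ≤ ‖(u - v) i‖ := by
    simp only [Pi.sub_apply, vabs, Real.norm_eq_abs]
    exact abs_abs_sub_abs_le_abs_sub _ _
  exact pow_le_pow_left₀ (norm_nonneg _) h 2

theorem stmt1 {n : ℕ} (A B Ω : Matrix (Fin n) (Fin n) ℝ) (b xs : Fin n → ℝ)
    (hinv : IsUnit (Ω + A).det)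
    (hcond : spec (Ω + A)⁻¹ < 1 / (spec (A - Ω) + 2 * spec B))
    (hsol : A.mulVec xs - B.mulVec (vabs xs) = b)
    (x : ℕ → Fin n → ℝ)
    (hit : ∀ k, (Ω + A).mulVec (x (k + 1)) =
      (Ω - A).mulVec (x k) + (2 : ℝ) • (B.mulVec (vabs (x k)) + b)) :
    (∃ c : ℝ, c < 1 ∧ ∀ k, enorm2 (x (k + 1) - xs) ≤ c * enorm2 (x k - xs)) ∧
      Tendsto x atTop (nhds xs) := by
  set d : ℝ := spec (A - Ω) + 2 * spec B with hd
  have hd0 : 0 ≤ d := by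
    have := norm_nonneg (Matrix.toEuclideanCLM (𝕜 := ℝ) (A - Ω))
    have := norm_nonneg (Matrix.toEuclideanCLM (𝕜 := ℝ) B)
    simp only [hd, spec]; positivity
  have hdpos : 0 < d := by
    rcases hd0.lt_or_eq with h | h
    · exact h
    · exfalso
      rw [← h] at hcond
      simp only [div_zero] at hcond
      exact absurd hcond (not_lt.2 (norm_nonneg _))
  have hc1 : spec (Ω + A)⁻¹ * d < 1 := (lt_div_iff₀ hdpos).mp hcond
  set c : ℝ := spec (Ω + A)⁻¹ * d with hcdef
  have hc0 : 0 ≤ c := mul_nonneg (norm_nonneg _) hd0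
  -- error recursion
  have key : ∀ k, x (k + 1) - xs =
      (Ω + A)⁻¹.mulVec ((Ω - A).mulVec (x k - xs)
        + (2 : ℝ) • B.mulVec (vabs (x k) - vabs xs)) := by
    intro k
    have h2 : (Ω + A).mulVec (x (k + 1) - xs) =
        (Ω - A).mulVec (x k - xs) + (2 : ℝ) • B.mulVec (vabs (x k) - vabs xs) := by
      have hit' := hit k
      rw [← hsol] at hit'
      simp only [Matrix.mulVec_sub, Matrix.add_mulVec, Matrix.sub_mulVec] at hit' ⊢
      rw [hit']
      module
    have := congrArg (fun v => (Ω + A)⁻¹.mulVec v) h2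
    simpa [Matrix.mulVec_mulVec, Matrix.nonsing_inv_mul _ hinv] using this
  -- contraction bound
  have hbound : ∀ k, enorm2 (x (k + 1) - xs) ≤ c * enorm2 (x k - xs) := by
    intro k
    rw [key k]
    calc enorm2 ((Ω + A)⁻¹.mulVec _)
        ≤ spec (Ω + A)⁻¹ * enorm2 ((Ω - A).mulVec (x k - xs)
            + (2 : ℝ) • B.mulVec (vabs (x k) - vabs xs)) := enorm2_mulVec_le _ _
      _ ≤ spec (Ω + A)⁻¹ * (spec (A - Ω) * enorm2 (x k - xs)
            + 2 * (spec B * enorm2 (x k - xs))) := by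
          apply mul_le_mul_of_nonneg_left _ (norm_nonneg _)
          refine le_trans (enorm2_add_le _ _) (add_le_add ?_ ?_)
          · have hneg : (Ω - A).mulVec (x k - xs) = -((A - Ω).mulVec (x k - xs)) := by
              simp [Matrix.sub_mulVec]
            rw [hneg, enorm2_neg]
            exact enorm2_mulVec_le _ _
          · rw [enorm2_smul]
            have h1 : enorm2 (B.mulVec (vabs (x k) - vabs xs))
                ≤ spec B * enorm2 (vabs (x k) - vabs xs) := enorm2_mulVec_le _ _
            have h2 := enorm2_vabs_sub (x k) xs
            have : enorm2 (B.mulVec (vabs (x k) - vabs xs))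
                ≤ spec B * enorm2 (x k - xs) :=
              h1.trans (mul_le_mul_of_nonneg_left h2 (norm_nonneg _))
            calc |(2:ℝ)| * enorm2 (B.mulVec (vabs (x k) - vabs xs))
                = 2 * enorm2 (B.mulVec (vabs (x k) - vabs xs)) := by norm_num
              _ ≤ 2 * (spec B * enorm2 (x k - xs)) := by linarith
      _ = c * enorm2 (x k - xs) := by rw [hcdef, hd]; ring
  refine ⟨⟨c, hc1, hbound⟩, ?_⟩
  -- convergence
  have hgeo : ∀ k, enorm2 (x k - xs) ≤ c ^ k * enorm2 (x 0 - xs) := by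
    intro k
    induction k with
    | zero => simp
    | succ k ih =>
      calc enorm2 (x (k + 1) - xs) ≤ c * enorm2 (x k - xs) := hbound k
        _ ≤ c * (c ^ k * enorm2 (x 0 - xs)) := mul_le_mul_of_nonneg_left ih hc0
        _ = c ^ (k + 1) * enorm2 (x 0 - xs) := by ring
  have htend0 : Tendsto (fun k => enorm2 (x k - xs)) atTop (nhds 0) := by
    have h1 : Tendsto (fun k : ℕ => c ^ k * enorm2 (x 0 - xs)) atTop (nhds 0) := by
      have := (tendsto_pow_atTop_nhds_zero_of_lt_one hc0 hc1).mul_const (enorm2 (x 0 - xs))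
      simpa using this
    exact squeeze_zero (fun k => norm_nonneg _) hgeo h1
  have hy : Tendsto (fun k => (WithLp.equiv 2 (Fin n → ℝ)).symm (x k)) atTop
      (nhds ((WithLp.equiv 2 (Fin n → ℝ)).symm xs)) := by
    rw [tendsto_iff_norm_sub_tendsto_zero]
    refine htend0.congr fun k => ?_
    simp [enorm2, WithLp.equiv_symm_apply, WithLp.toLp_sub]
  have hcont := (PiLp.continuousLinearEquiv 2 ℝ (fun _ : Fin n => ℝ)).continuous
  have := (hcont.tendsto _).comp hy
  simpa [Function.comp_def, PiLp.coe_continuousLinearEquiv] using this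
end

section
/- Let A be a symmetric positive definite n×n real matrix with extreme eigenvalues μ_min > 1 and μ_max, and let ω > (μ_max - μ_min)/2 + 1. Then ‖(A + ωI)^{-1}‖₂ (‖ωI - A‖₂ + 2) < 1, so the NMN iteration (ωI + A) x^(k+1) = (ωI - A) x^(k) + 2(|x^(k)| + b) converges linearly from any initial vector to any solution x* of A x - |x| = b. -/
set_option maxHeartbeats 1000000

open Matrix Filter

section Aux

variable {n : ℕ}

lemma reprCLM (A : Matrix (Fin n) (Fin n) ℝ) (hH : A.IsHermitian)
    (x : EuclideanSpace ℝ (Fin n)) (i : Fin n) :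
    hH.eigenvectorBasis.repr (Matrix.toEuclideanCLM (𝕜 := ℝ) A x) i
      = hH.eigenvalues i * hH.eigenvectorBasis.repr x i := by
  rw [OrthonormalBasis.repr_apply_apply, OrthonormalBasis.repr_apply_apply]
  have hs := Matrix.isHermitian_iff_isSymmetric.1 hH
  have h1 : Matrix.toEuclideanCLM (𝕜 := ℝ) A x = Matrix.toEuclideanLin A x := rfl
  rw [h1, ← hs (hH.eigenvectorBasis i) x]
  have h2 : Matrix.toEuclideanLin A (hH.eigenvectorBasis i)
      = hH.eigenvalues i • hH.eigenvectorBasis i :=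
    congrArg (WithLp.equiv 2 (Fin n → ℝ)).symm (hH.mulVec_eigenvectorBasis i)
  rw [h2, inner_smul_left]
  simp [RCLike.star_def]

lemma norm_sq_repr (b : OrthonormalBasis (Fin n) ℝ (EuclideanSpace ℝ (Fin n)))
    (y : EuclideanSpace ℝ (Fin n)) : ‖y‖ ^ 2 = ∑ i, (b.repr y i) ^ 2 := by
  rw [← b.repr.norm_map y, EuclideanSpace.norm_eq, Real.sq_sqrt (by positivity)]
  simp [sq_abs]

lemma key_upper (b : OrthonormalBasis (Fin n) ℝ (EuclideanSpace ℝ (Fin n)))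
    (T : EuclideanSpace ℝ (Fin n) →L[ℝ] EuclideanSpace ℝ (Fin n)) (g : Fin n → ℝ)
    (hT : ∀ x i, b.repr (T x) i = g i * b.repr x i) (r : ℝ) (hr : 0 ≤ r)
    (hg : ∀ i, |g i| ≤ r) (x : EuclideanSpace ℝ (Fin n)) : ‖T x‖ ≤ r * ‖x‖ := by
  have h : ‖T x‖ ^ 2 ≤ (r * ‖x‖) ^ 2 := by
    rw [norm_sq_repr b, mul_pow, norm_sq_repr b x, Finset.mul_sum]
    refine Finset.sum_le_sum fun i _ => ?_
    rw [hT, mul_pow]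
    have : (g i) ^ 2 ≤ r ^ 2 := by
      have h1 := hg i; have h2 := abs_nonneg (g i)
      nlinarith [sq_abs (g i)]
    nlinarith [sq_nonneg (b.repr x i)]
  exact le_of_pow_le_pow_left₀ two_ne_zero (by positivity) h

lemma key_lower (b : OrthonormalBasis (Fin n) ℝ (EuclideanSpace ℝ (Fin n)))
    (T : EuclideanSpace ℝ (Fin n) →L[ℝ] EuclideanSpace ℝ (Fin n)) (g : Fin n → ℝ)
    (hT : ∀ x i, b.repr (T x) i = g i * b.repr x i) (m : ℝ) (hm : 0 ≤ m)
    (hg : ∀ i, m ≤ g i) (x : EuclideanSpace ℝ (Fin n)) : m * ‖x‖ ≤ ‖T x‖ := by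
  have h : (m * ‖x‖) ^ 2 ≤ ‖T x‖ ^ 2 := by
    rw [norm_sq_repr b, mul_pow, norm_sq_repr b x, Finset.mul_sum]
    refine Finset.sum_le_sum fun i _ => ?_
    rw [hT, mul_pow]
    have h1 := hg i
    have h2 : m ^ 2 ≤ g i ^ 2 := by nlinarith
    exact mul_le_mul_of_nonneg_right h2 (sq_nonneg _)
  exact le_of_pow_le_pow_left₀ two_ne_zero (by positivity) h

lemma vabs_lip (u v : Fin n → ℝ) : enorm2 (vabs u - vabs v) ≤ enorm2 (u - v) := by
  unfold enorm2
  rw [EuclideanSpace.norm_eq, EuclideanSpace.norm_eq]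
  apply Real.sqrt_le_sqrt
  refine Finset.sum_le_sum fun i _ => ?_
  have h1 : (WithLp.equiv 2 (Fin n → ℝ)).symm (vabs u - vabs v) i = |u i| - |v i| := rfl
  have h2 : (WithLp.equiv 2 (Fin n → ℝ)).symm (u - v) i = u i - v i := rfl
  rw [h1, h2, Real.norm_eq_abs, Real.norm_eq_abs, sq_abs, sq_abs]
  nlinarith [le_abs_self (u i * v i), abs_mul (u i) (v i), sq_abs (u i), sq_abs (v i)]

lemma Matrix.toEuclideanCLM_piLp_equiv_symm (A : Matrix (Fin n) (Fin n) ℝ) (x : Fin n → ℝ) :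
    Matrix.toEuclideanCLM (𝕜 := ℝ) A ((WithLp.equiv 2 (Fin n → ℝ)).symm x)
      = (WithLp.equiv 2 (Fin n → ℝ)).symm (Matrix.toLin' A x) := rfl

lemma WithLp.equiv_symm_add (x y : Fin n → ℝ) :
    (WithLp.equiv 2 (Fin n → ℝ)).symm (x + y)
      = (WithLp.equiv 2 (Fin n → ℝ)).symm x + (WithLp.equiv 2 (Fin n → ℝ)).symm y := rfl

lemma WithLp.equiv_symm_sub (x y : Fin n → ℝ) :
    (WithLp.equiv 2 (Fin n → ℝ)).symm (x - y)
      = (WithLp.equiv 2 (Fin n → ℝ)).symm x - (WithLp.equiv 2 (Fin n → ℝ)).symm y := rfl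

lemma WithLp.equiv_symm_smul (c : ℝ) (x : Fin n → ℝ) :
    (WithLp.equiv 2 (Fin n → ℝ)).symm (c • x) = c • (WithLp.equiv 2 (Fin n → ℝ)).symm x := rfl

lemma enorm2_mulVec (B : Matrix (Fin n) (Fin n) ℝ) (v : Fin n → ℝ) :
    enorm2 (B.mulVec v) = ‖Matrix.toEuclideanCLM (𝕜 := ℝ) B ((WithLp.equiv 2 (Fin n → ℝ)).symm v)‖ := by
  rw [Matrix.toEuclideanCLM_piLp_equiv_symm]; rfl

end Aux

theorem stmt8 {n : ℕ} (A : Matrix (Fin n) (Fin n) ℝ) (b : Fin n → ℝ)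
    (hA : A.PosDef) (hH : A.IsHermitian) (μmin μmax : ℝ)
    (hminmem : ∃ i, hH.eigenvalues i = μmin)
    (hmaxmem : ∃ i, hH.eigenvalues i = μmax)
    (hmin : ∀ i, μmin ≤ hH.eigenvalues i)
    (hmax : ∀ i, hH.eigenvalues i ≤ μmax)
    (hμ : 1 < μmin)
    (ω : ℝ) (hωbig : (μmax - μmin) / 2 + 1 < ω) :
    spec (A + ω • (1 : Matrix (Fin n) (Fin n) ℝ))⁻¹ *
      (spec (ω • (1 : Matrix (Fin n) (Fin n) ℝ) - A) + 2) < 1 ∧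
    ∀ xs : Fin n → ℝ, A.mulVec xs - vabs xs = b →
      ∀ x : ℕ → Fin n → ℝ,
        (∀ k, (ω • (1 : Matrix (Fin n) (Fin n) ℝ) + A).mulVec (x (k + 1)) =
          (ω • (1 : Matrix (Fin n) (Fin n) ℝ) - A).mulVec (x k) +
            (2 : ℝ) • (vabs (x k) + b)) →
        (∃ c : ℝ, c < 1 ∧ ∀ k, enorm2 (x (k + 1) - xs) ≤ c * enorm2 (x k - xs)) ∧
          Tendsto x atTop (nhds xs) := by
  have hminmax : μmin ≤ μmax := by
    obtain ⟨i, hi⟩ := hminmem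
    exact hi ▸ hmax i
  have hω1 : (1 : ℝ) < ω := by linarith
  set M : Matrix (Fin n) (Fin n) ℝ := ω • (1 : Matrix (Fin n) (Fin n) ℝ) + A with hM
  set N : Matrix (Fin n) (Fin n) ℝ := ω • (1 : Matrix (Fin n) (Fin n) ℝ) - A with hN
  have hAM : A + ω • (1 : Matrix (Fin n) (Fin n) ℝ) = M := add_comm _ _
  set m : ℝ := ω + μmin with hm
  have hmpos : 0 < m := by simp only [hm]; linarith
  set r : ℝ := max (ω - μmin) (μmax - ω) with hr
  have hr0 : 0 ≤ r := by
    have h1 := le_max_left (ω - μmin) (μmax - ω)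
    have h2 := le_max_right (ω - μmin) (μmax - ω)
    linarith
  have hrm : r + 2 < m := by
    have : r < m - 2 := max_lt (by simp only [hm]; linarith) (by simp only [hm]; linarith)
    linarith
  set bE := hH.eigenvectorBasis with hbE
  -- repr formulas
  have hreprN : ∀ (x : EuclideanSpace ℝ (Fin n)) (i : Fin n),
      bE.repr (Matrix.toEuclideanCLM (𝕜 := ℝ) N x) i
        = (ω - hH.eigenvalues i) * bE.repr x i := by
    intro x i
    have h1 : Matrix.toEuclideanCLM (𝕜 := ℝ) N x
        = ω • x - Matrix.toEuclideanCLM (𝕜 := ℝ) A x := by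
      have hx : x = (WithLp.equiv 2 (Fin n → ℝ)).symm (WithLp.equiv 2 (Fin n → ℝ) x) := rfl
      rw [hx, Matrix.toEuclideanCLM_piLp_equiv_symm, Matrix.toEuclideanCLM_piLp_equiv_symm]
      rw [Matrix.toLin'_apply, Matrix.toLin'_apply]
      rw [show N *ᵥ (WithLp.equiv 2 (Fin n → ℝ) x)
            = ω • (WithLp.equiv 2 (Fin n → ℝ) x) - A *ᵥ (WithLp.equiv 2 (Fin n → ℝ) x) by
          rw [hN, Matrix.sub_mulVec, Matrix.smul_mulVec, Matrix.one_mulVec]]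
      rw [WithLp.equiv_symm_sub, WithLp.equiv_symm_smul]
    rw [h1, map_sub, _root_.map_smul]
    have := reprCLM A hH x i
    simp only [hbE] at *
    rw [PiLp.sub_apply, PiLp.smul_apply, this, smul_eq_mul]
    ring
  have hreprM : ∀ (x : EuclideanSpace ℝ (Fin n)) (i : Fin n),
      bE.repr (Matrix.toEuclideanCLM (𝕜 := ℝ) M x) i
        = (ω + hH.eigenvalues i) * bE.repr x i := by
    intro x i
    have h1 : Matrix.toEuclideanCLM (𝕜 := ℝ) M x
        = ω • x + Matrix.toEuclideanCLM (𝕜 := ℝ) A x := by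
      have hx : x = (WithLp.equiv 2 (Fin n → ℝ)).symm (WithLp.equiv 2 (Fin n → ℝ) x) := rfl
      rw [hx, Matrix.toEuclideanCLM_piLp_equiv_symm, Matrix.toEuclideanCLM_piLp_equiv_symm]
      rw [Matrix.toLin'_apply, Matrix.toLin'_apply]
      rw [show M *ᵥ (WithLp.equiv 2 (Fin n → ℝ) x)
            = ω • (WithLp.equiv 2 (Fin n → ℝ) x) + A *ᵥ (WithLp.equiv 2 (Fin n → ℝ) x) by
          rw [hM, Matrix.add_mulVec, Matrix.smul_mulVec, Matrix.one_mulVec]]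
      rw [WithLp.equiv_symm_add, WithLp.equiv_symm_smul]
    rw [h1, map_add, _root_.map_smul]
    have := reprCLM A hH x i
    simp only [hbE] at *
    rw [PiLp.add_apply, PiLp.smul_apply, this, smul_eq_mul]
    ring
  -- M is invertible
  have hMpd : M.PosDef := by
    refine Matrix.PosDef.add ?_ hA
    refine Matrix.PosDef.of_dotProduct_mulVec_pos ?_ ?_
    · unfold Matrix.IsHermitian
      simp
    · intro x hx
      have : (ω • (1 : Matrix (Fin n) (Fin n) ℝ)).mulVec x = ω • x := by
        rw [Matrix.smul_mulVec, Matrix.one_mulVec]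
      rw [this]
      simp only [dotProduct_smul, smul_eq_mul]
      exact mul_pos (by linarith) (Matrix.dotProduct_star_self_pos_iff.mpr hx)
  have hdet : M.det ≠ 0 := ne_of_gt hMpd.det_pos
  -- spec bounds
  have hspecN : spec N ≤ r := by
    apply ContinuousLinearMap.opNorm_le_bound _ hr0
    intro x
    refine key_upper bE _ _ hreprN r hr0 (fun i => ?_) x
    rw [abs_le]
    constructor
    · have := hmax i
      have := le_max_right (ω - μmin) (μmax - ω)
      linarith
    · have := hmin i
      have := le_max_left (ω - μmin) (μmax - ω)
      linarith
  have hlowM : ∀ x : EuclideanSpace ℝ (Fin n),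
      m * ‖x‖ ≤ ‖Matrix.toEuclideanCLM (𝕜 := ℝ) M x‖ := by
    intro x
    refine key_lower bE _ _ hreprM m hmpos.le (fun i => ?_) x
    have := hmin i
    simp only [hm]
    linarith
  have hMinv : ∀ y : EuclideanSpace ℝ (Fin n),
      Matrix.toEuclideanCLM (𝕜 := ℝ) M (Matrix.toEuclideanCLM (𝕜 := ℝ) M⁻¹ y) = y := by
    intro y
    have : Matrix.toEuclideanCLM (𝕜 := ℝ) M * Matrix.toEuclideanCLM (𝕜 := ℝ) M⁻¹
        = Matrix.toEuclideanCLM (𝕜 := ℝ) (M * M⁻¹) := (map_mul _ _ _).symm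
    calc Matrix.toEuclideanCLM (𝕜 := ℝ) M (Matrix.toEuclideanCLM (𝕜 := ℝ) M⁻¹ y)
        = (Matrix.toEuclideanCLM (𝕜 := ℝ) M * Matrix.toEuclideanCLM (𝕜 := ℝ) M⁻¹) y := rfl
      _ = Matrix.toEuclideanCLM (𝕜 := ℝ) (M * M⁻¹) y := by rw [this]
      _ = y := by rw [Matrix.mul_nonsing_inv M (isUnit_iff_ne_zero.mpr hdet), _root_.map_one, ContinuousLinearMap.one_apply]
  have hspecMinv : spec M⁻¹ ≤ 1 / m := by
    apply ContinuousLinearMap.opNorm_le_bound _ (by positivity)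
    intro y
    have h1 := hlowM (Matrix.toEuclideanCLM (𝕜 := ℝ) M⁻¹ y)
    rw [hMinv y] at h1
    rw [one_div, inv_mul_eq_div, le_div_iff₀ hmpos]
    nlinarith [norm_nonneg y]
  have hspecN0 : 0 ≤ spec N := norm_nonneg _
  have hspecMinv0 : 0 ≤ spec M⁻¹ := norm_nonneg _
  set c : ℝ := spec M⁻¹ * (spec N + 2) with hc
  have hc0 : 0 ≤ c := by positivity
  have hc1 : c < 1 := by
    have h1 : c ≤ (1 / m) * (r + 2) :=
      mul_le_mul hspecMinv (by linarith) (by linarith) (by positivity)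
    have h2 : (1 / m) * (r + 2) < 1 := by
      rw [one_div, inv_mul_lt_iff₀ hmpos]
      linarith
    linarith
  constructor
  · rw [hAM]; exact hc1
  intro xs hsol x hiter
  -- fixed point identity
  have hfix : M.mulVec xs = N.mulVec xs + (2 : ℝ) • (vabs xs + b) := by
    rw [← hsol]
    simp only [hM, hN, Matrix.add_mulVec, Matrix.sub_mulVec, Matrix.smul_mulVec,
      Matrix.one_mulVec]
    ext i
    simp only [Pi.add_apply, Pi.sub_apply, Pi.smul_apply, smul_eq_mul]
    ring
  -- error recursion
  have herr : ∀ k, x (k + 1) - xs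
      = M⁻¹.mulVec (N.mulVec (x k - xs) + (2 : ℝ) • (vabs (x k) - vabs xs)) := by
    intro k
    have h1 : M.mulVec (x (k + 1) - xs)
        = N.mulVec (x k - xs) + (2 : ℝ) • (vabs (x k) - vabs xs) := by
      rw [Matrix.mulVec_sub, hiter k, hfix, Matrix.mulVec_sub]
      ext i
      simp only [Pi.add_apply, Pi.sub_apply, Pi.smul_apply, smul_eq_mul]
      ring
    rw [← h1, Matrix.mulVec_mulVec, Matrix.nonsing_inv_mul M (isUnit_iff_ne_zero.mpr hdet), Matrix.one_mulVec]
  have hstep : ∀ k, enorm2 (x (k + 1) - xs) ≤ c * enorm2 (x k - xs) := by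
    intro k
    rw [herr k, enorm2_mulVec]
    have h1 := ContinuousLinearMap.le_opNorm (Matrix.toEuclideanCLM (𝕜 := ℝ) M⁻¹)
      ((WithLp.equiv 2 (Fin n → ℝ)).symm (N.mulVec (x k - xs) + (2 : ℝ) • (vabs (x k) - vabs xs)))
    have h2 : ‖(WithLp.equiv 2 (Fin n → ℝ)).symm
        (N.mulVec (x k - xs) + (2 : ℝ) • (vabs (x k) - vabs xs))‖
        ≤ spec N * enorm2 (x k - xs) + 2 * enorm2 (x k - xs) := by
      rw [WithLp.equiv_symm_add]
      refine le_trans (norm_add_le _ _) (add_le_add ?_ ?_)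
      · show enorm2 (N.mulVec (x k - xs)) ≤ _
        rw [enorm2_mulVec]
        exact ContinuousLinearMap.le_opNorm (Matrix.toEuclideanCLM (𝕜 := ℝ) N)
          ((WithLp.equiv 2 (Fin n → ℝ)).symm (x k - xs))
      · rw [WithLp.equiv_symm_smul, norm_smul]
        simp only [Real.norm_ofNat]
        have := vabs_lip (x k) xs
        unfold enorm2 at *
        nlinarith [norm_nonneg ((WithLp.equiv 2 (Fin n → ℝ)).symm (vabs (x k) - vabs xs))]
    calc ‖Matrix.toEuclideanCLM (𝕜 := ℝ) M⁻¹ ((WithLp.equiv 2 (Fin n → ℝ)).symm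
          (N.mulVec (x k - xs) + (2 : ℝ) • (vabs (x k) - vabs xs)))‖
        ≤ spec M⁻¹ * (spec N * enorm2 (x k - xs) + 2 * enorm2 (x k - xs)) := by
          refine le_trans h1 ?_
          exact mul_le_mul_of_nonneg_left h2 hspecMinv0
      _ = c * enorm2 (x k - xs) := by rw [hc]; ring
  refine ⟨⟨c, hc1, hstep⟩, ?_⟩
  -- convergence
  have hgeom : ∀ k, enorm2 (x k - xs) ≤ c ^ k * enorm2 (x 0 - xs) := by
    intro k
    induction k with
    | zero => simp
    | succ k ih =>
      calc enorm2 (x (k + 1) - xs) ≤ c * enorm2 (x k - xs) := hstep k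
        _ ≤ c * (c ^ k * enorm2 (x 0 - xs)) := mul_le_mul_of_nonneg_left ih hc0
        _ = c ^ (k + 1) * enorm2 (x 0 - xs) := by ring
  have htend0 : Tendsto (fun k => (WithLp.equiv 2 (Fin n → ℝ)).symm (x k - xs))
      atTop (nhds 0) := by
    apply squeeze_zero_norm (fun k => hgeom k)
    have := tendsto_pow_atTop_nhds_zero_of_lt_one hc0 hc1
    simpa using this.mul_const (enorm2 (x 0 - xs))
  have htendy : Tendsto (fun k => (WithLp.equiv 2 (Fin n → ℝ)).symm (x k)) atTop
      (nhds ((WithLp.equiv 2 (Fin n → ℝ)).symm xs)) := by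
    rw [← tendsto_sub_nhds_zero_iff]
    have heq : (fun k => (WithLp.equiv 2 (Fin n → ℝ)).symm (x k)
          - (WithLp.equiv 2 (Fin n → ℝ)).symm xs)
        = fun k => (WithLp.equiv 2 (Fin n → ℝ)).symm (x k - xs) := by
      funext k; rw [WithLp.equiv_symm_sub]
    rw [heq]; exact htend0
  have hφc : Continuous fun z : EuclideanSpace ℝ (Fin n) => (WithLp.equiv 2 (Fin n → ℝ)) z :=
    (PiLp.continuousLinearEquiv 2 ℝ (fun _ : Fin n => ℝ)).continuous
  have hfin := (hφc.tendsto _).comp htendy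
  simp only [Function.comp_def, Equiv.apply_symm_apply] at hfin
  exact hfin
end

section
/- Let A be an n×n real H-matrix (its comparison matrix ⟨A⟩ is a nonsingular M-matrix) with positive diagonal entries, and let Ω = ωI with ω > 0. Then A + Ω is invertible and |(A + Ω)^{-1}| ≤ (⟨A⟩ + Ω)^{-1} entrywise. -/
open Matrix Filter Topology

section core

variable {m : Type*} [Fintype m] [DecidableEq m]

attribute [local instance] Matrix.linftyOpNormedRing Matrix.linftyOpNormedAlgebra

lemma abs_entry_le_linfty_norm (M : Matrix m m ℝ) (i j : m) : |M i j| ≤ ‖M‖ := by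
  rw [Matrix.linfty_opNorm_def]
  have h1 : ‖M i j‖₊ ≤ ∑ k, ‖M i k‖₊ :=
    Finset.single_le_sum (f := fun k => ‖M i k‖₊) (fun k _ => zero_le) (Finset.mem_univ j)
  have h2 : (∑ k, ‖M i k‖₊) ≤ Finset.univ.sup fun i => ∑ j, ‖M i j‖₊ :=
    Finset.le_sup (f := fun i => ∑ j, ‖M i j‖₊) (Finset.mem_univ i)
  have := h1.trans h2
  rw [← NNReal.coe_le_coe] at this
  simpa [Real.norm_eq_abs] using this

lemma tendsto_entry {f : ℕ → Matrix m m ℝ} {M : Matrix m m ℝ}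
    (h : Tendsto f atTop (𝓝 M)) (i j : m) :
    Tendsto (fun k => f k i j) atTop (𝓝 (M i j)) := by
  rw [tendsto_iff_norm_sub_tendsto_zero] at ⊢
  replace h := tendsto_iff_norm_sub_tendsto_zero.mp h
  refine squeeze_zero (fun k => norm_nonneg _) (fun k => ?_) h
  simpa [Real.norm_eq_abs] using abs_entry_le_linfty_norm (f k - M) i j

lemma neumann_entrywise (P Q : Matrix m m ℝ) (hPQ : ∀ i j, |P i j| ≤ Q i j) (hQ : ‖Q‖ < 1) :
    IsUnit (1 - P) ∧ IsUnit (1 - Q) ∧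
      ∀ i j, |Ring.inverse (1 - P) i j| ≤ Ring.inverse (1 - Q) i j := by
  haveI : CompleteSpace (Matrix m m ℝ) := FiniteDimensional.complete ℝ _
  have hQ0 : ∀ i j, 0 ≤ Q i j := fun i j => (abs_nonneg _).trans (hPQ i j)
  have hP : ‖P‖ < 1 := by
    refine lt_of_le_of_lt ?_ hQ
    rw [Matrix.linfty_opNorm_def, Matrix.linfty_opNorm_def]
    rw [NNReal.coe_le_coe]
    refine Finset.sup_mono_fun fun i _ => Finset.sum_le_sum fun j _ => ?_
    rw [← NNReal.coe_le_coe]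
    simpa [Real.norm_eq_abs, abs_of_nonneg (hQ0 i j)] using hPQ i j
  have hpow : ∀ (k : ℕ) (i j : m), |(P ^ k) i j| ≤ (Q ^ k) i j := by
    intro k
    induction k with
    | zero =>
      intro i j
      simp only [pow_zero, Matrix.one_apply]
      split_ifs <;> simp
    | succ k ih =>
      intro i j
      rw [pow_succ, pow_succ, Matrix.mul_apply, Matrix.mul_apply]
      refine (Finset.abs_sum_le_sum_abs _ _).trans (Finset.sum_le_sum fun l _ => ?_)
      rw [abs_mul]
      exact mul_le_mul (ih i l) (hPQ l j) (abs_nonneg _) ((abs_nonneg _).trans (ih i l))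
  have hTP := (hasSum_geom_series_inverse P hP).tendsto_sum_nat
  have hTQ := (hasSum_geom_series_inverse Q hQ).tendsto_sum_nat
  refine ⟨isUnit_one_sub_of_norm_lt_one hP, isUnit_one_sub_of_norm_lt_one hQ, fun i j => ?_⟩
  refine le_of_tendsto_of_tendsto' ((tendsto_entry hTP i j).abs) (tendsto_entry hTQ i j)
    (fun k => ?_)
  rw [Matrix.sum_apply, Matrix.sum_apply]
  exact (Finset.abs_sum_le_sum_abs _ _).trans (Finset.sum_le_sum fun l _ => hpow l i j)

theorem stmt9 {n : ℕ} (A : Matrix (Fin n) (Fin n) ℝ)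
    (hM : IsUnit (compMat A).det) (hMinv : ∀ i j, 0 ≤ (compMat A)⁻¹ i j)
    (hdiag : ∀ i, 0 < A i i)
    (ω : ℝ) (hω : 0 < ω) :
    IsUnit (A + ω • (1 : Matrix (Fin n) (Fin n) ℝ)).det ∧
      ∀ i j, |(A + ω • (1 : Matrix (Fin n) (Fin n) ℝ))⁻¹ i j| ≤
        (compMat A + ω • (1 : Matrix (Fin n) (Fin n) ℝ))⁻¹ i j := by
  classical
  set x : Fin n → ℝ := (compMat A)⁻¹ *ᵥ (fun _ => 1) with hxdef
  have hMx : compMat A *ᵥ x = fun _ => 1 := by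
    rw [hxdef, Matrix.mulVec_mulVec, Matrix.mul_nonsing_inv _ hM, Matrix.one_mulVec]
  have hxi : ∀ i, x i = ∑ j, (compMat A)⁻¹ i j := by
    intro i; simp [hxdef, Matrix.mulVec, dotProduct]
  have hxpos : ∀ i, 0 < x i := by
    intro i
    have hx0 : 0 ≤ x i := by
      rw [hxi]; exact Finset.sum_nonneg fun j _ => hMinv i j
    rcases hx0.lt_or_eq with h | h
    · exact h
    · exfalso
      have hz : ∀ j ∈ Finset.univ, (compMat A)⁻¹ i j = 0 :=
        (Finset.sum_eq_zero_iff_of_nonneg (fun j _ => hMinv i j)).mp ((hxi i) ▸ h.symm)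
      have h1 : ((compMat A)⁻¹ * compMat A) i i = 1 := by
        rw [Matrix.nonsing_inv_mul _ hM, Matrix.one_apply_eq]
      rw [Matrix.mul_apply] at h1
      have : (0:ℝ) = 1 := by
        rw [← h1]
        exact (Finset.sum_eq_zero fun j hj => by rw [hz j hj, zero_mul]).symm
      norm_num at this
  -- row dominance
  have key : ∀ i, ∑ j ∈ Finset.univ.erase i, |A i j| * x j = A i i * x i - 1 := by
    intro i
    have h1 : ∑ j, compMat A i j * x j = 1 := by
      have := congrFun hMx i
      simpa [Matrix.mulVec, dotProduct] using this
    rw [← Finset.add_sum_erase _ _ (Finset.mem_univ i)] at h1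
    have hd : compMat A i i = A i i := by simp [compMat, abs_of_pos (hdiag i)]
    have hsum : ∑ j ∈ Finset.univ.erase i, compMat A i j * x j
        = -∑ j ∈ Finset.univ.erase i, |A i j| * x j := by
      rw [← Finset.sum_neg_distrib]
      refine Finset.sum_congr rfl fun j hj => ?_
      have hij : i ≠ j := fun hh => (Finset.mem_erase.mp hj).1 hh.symm
      simp [compMat, hij]
    rw [hd, hsum] at h1
    linarith
  set d : Fin n → ℝ := fun i => A i i + ω with hddef
  have hdpos : ∀ i, 0 < d i := fun i => by have := hdiag i; simp [hddef]; linarith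
  set y : Fin n → ℝ := fun i => d i * x i with hydef
  have hypos : ∀ i, 0 < y i := fun i => mul_pos (hdpos i) (hxpos i)
  set P' : Matrix (Fin n) (Fin n) ℝ :=
    fun i j => if i = j then 0 else -(A i j) * x j / y i with hPdef
  set Q' : Matrix (Fin n) (Fin n) ℝ := fun i j => |P' i j| with hQdef
  have hQ'e : ∀ i j, Q' i j = if i = j then 0 else |A i j| * x j / y i := by
    intro i j
    by_cases h : i = j
    · simp [hQdef, hPdef, h]
    · simp only [hQdef, hPdef, if_neg h, neg_mul]
      rw [abs_div, abs_neg, abs_mul, abs_of_nonneg (hxpos j).le, abs_of_pos (hypos i)]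
  have hQ'row : ∀ i, ∑ j, Q' i j < 1 := by
    intro i
    have e1 : ∑ j, Q' i j = ∑ j ∈ Finset.univ.erase i, |A i j| * x j / y i := by
      rw [← Finset.add_sum_erase _ _ (Finset.mem_univ i)]
      have h0 : Q' i i = 0 := by rw [hQ'e, if_pos rfl]
      rw [h0, zero_add]
      refine Finset.sum_congr rfl fun j hj => ?_
      have hij : i ≠ j := fun hh => (Finset.mem_erase.mp hj).1 hh.symm
      rw [hQ'e, if_neg hij]
    rw [e1, ← Finset.sum_div, key i, div_lt_one (hypos i),
      show y i = (A i i + ω) * x i from rfl]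
    nlinarith [hxpos i, hω]
  have hnorm : ‖Q'‖ < 1 := by
    rw [Matrix.linfty_opNorm_def]
    have hlt : ∀ i, (∑ j, ‖Q' i j‖₊) < 1 := by
      intro i
      rw [← NNReal.coe_lt_coe]
      push_cast
      have : ∀ j, (‖Q' i j‖₊ : ℝ) = Q' i j := by
        intro j
        rw [coe_nnnorm, Real.norm_eq_abs]
        exact abs_of_nonneg (by rw [hQdef]; exact abs_nonneg _)
      calc (∑ j, (‖Q' i j‖₊:ℝ)) = ∑ j, Q' i j := Finset.sum_congr rfl fun j _ => this j
        _ < 1 := hQ'row i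
    have : (Finset.univ.sup fun i => ∑ j, ‖Q' i j‖₊) < 1 :=
      Finset.sup_lt_iff (by norm_num) |>.mpr fun i _ => hlt i
    exact_mod_cast this
  obtain ⟨hUP, hUQ, hent⟩ := neumann_entrywise P' Q'
    (fun i j => le_of_eq (by rw [hQdef])) hnorm
  have hTP1 : (1 - P') * (1 - P')⁻¹ = 1 :=
    Matrix.mul_nonsing_inv _ ((Matrix.isUnit_iff_isUnit_det _).mp hUP)
  have hTQ1 : (1 - Q') * (1 - Q')⁻¹ = 1 :=
    Matrix.mul_nonsing_inv _ ((Matrix.isUnit_iff_isUnit_det _).mp hUQ)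
  -- factorizations
  have hP0 : ∀ i, P' i i = 0 := fun i => by rw [hPdef]; exact if_pos rfl
  have hPne : ∀ i j, i ≠ j → P' i j = -A i j * x j / y i := fun i j h => by
    rw [hPdef]; exact if_neg h
  have hQ0 : ∀ i, Q' i i = 0 := fun i => by rw [hQ'e, if_pos rfl]
  have hcd : ∀ i, compMat A i i = A i i := fun i => by
    simp [compMat, abs_of_pos (hdiag i)]
  have hcne : ∀ i j, i ≠ j → compMat A i j = -|A i j| := fun i j h => by
    simp [compMat, h]
  have hyx : ∀ i, y i = (A i i + ω) * x i := fun i => rfl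
  have hBfac : A + ω • (1 : Matrix (Fin n) (Fin n) ℝ)
      = diagonal y * (1 - P') * diagonal (fun i => (x i)⁻¹) := by
    ext i j
    rw [Matrix.mul_diagonal, Matrix.diagonal_mul, Matrix.add_apply, Matrix.smul_apply,
      Matrix.sub_apply, smul_eq_mul]
    by_cases h : i = j
    · subst h
      rw [Matrix.one_apply_eq, hP0, sub_zero, mul_one, mul_one,
        hyx i, mul_assoc, mul_inv_cancel₀ (hxpos i).ne', mul_one]
    · rw [Matrix.one_apply_ne h, hPne i j h, mul_zero, add_zero,
        zero_sub, hyx i]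
      have h1 : A i i + ω ≠ 0 := (hdpos i).ne'
      have h2 : x i ≠ 0 := (hxpos i).ne'
      have h3 : x j ≠ 0 := (hxpos j).ne'
      field_simp
  have hNfac : compMat A + ω • (1 : Matrix (Fin n) (Fin n) ℝ)
      = diagonal y * (1 - Q') * diagonal (fun i => (x i)⁻¹) := by
    ext i j
    rw [Matrix.mul_diagonal, Matrix.diagonal_mul, Matrix.add_apply, Matrix.smul_apply,
      Matrix.sub_apply, smul_eq_mul]
    by_cases h : i = j
    · subst h
      rw [Matrix.one_apply_eq, hQ0, sub_zero, mul_one, mul_one, hcd i,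
        hyx i, mul_assoc, mul_inv_cancel₀ (hxpos i).ne', mul_one]
    · rw [Matrix.one_apply_ne h, hQ'e, if_neg h, mul_zero, add_zero,
        zero_sub, hcne i j h, hyx i]
      have h1 : A i i + ω ≠ 0 := (hdpos i).ne'
      have h2 : x i ≠ 0 := (hxpos i).ne'
      have h3 : x j ≠ 0 := (hxpos j).ne'
      field_simp
  have hdone : ∀ v : Fin n → ℝ, (∀ i, v i = 1) →
      (diagonal v : Matrix (Fin n) (Fin n) ℝ) = 1 := by
    intro v hv
    have hv' : v = 1 := funext fun i => hv i
    rw [hv']; exact Matrix.diagonal_one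
  have e1 : ∀ Z : Matrix (Fin n) (Fin n) ℝ,
      diagonal (fun i => (x i)⁻¹) * (diagonal x * Z) = Z := by
    intro Z
    rw [← Matrix.mul_assoc, Matrix.diagonal_mul_diagonal,
      hdone _ fun i => inv_mul_cancel₀ (hxpos i).ne', Matrix.one_mul]
  have e2 : diagonal y * diagonal (fun i => (y i)⁻¹) = 1 := by
    rw [Matrix.diagonal_mul_diagonal, hdone _ fun i => mul_inv_cancel₀ (hypos i).ne']
  have hinv : ∀ (T : Matrix (Fin n) (Fin n) ℝ), T * T⁻¹ = 1 →
      (diagonal y * T * diagonal (fun i => (x i)⁻¹))⁻¹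
        = diagonal x * T⁻¹ * diagonal (fun i => (y i)⁻¹) := by
    intro T hT
    apply Matrix.inv_eq_right_inv
    simp only [Matrix.mul_assoc]
    rw [e1, show T * (T⁻¹ * diagonal (fun i => (y i)⁻¹)) = diagonal (fun i => (y i)⁻¹) by
      rw [← Matrix.mul_assoc, hT, Matrix.one_mul], e2]
  have hBinv := hinv _ hTP1
  have hNinv := hinv _ hTQ1
  constructor
  · rw [← Matrix.isUnit_iff_isUnit_det, hBfac]
    have h1 : IsUnit (diagonal y : Matrix (Fin n) (Fin n) ℝ) :=
      (Matrix.isUnit_iff_isUnit_det _).mpr (by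
        rw [Matrix.det_diagonal]
        exact isUnit_iff_ne_zero.mpr (Finset.prod_ne_zero_iff.mpr fun i _ => (hypos i).ne'))
    have h2 : IsUnit (diagonal (fun i => (x i)⁻¹) : Matrix (Fin n) (Fin n) ℝ) :=
      (Matrix.isUnit_iff_isUnit_det _).mpr (by
        rw [Matrix.det_diagonal]
        exact isUnit_iff_ne_zero.mpr
          (Finset.prod_ne_zero_iff.mpr fun i _ => inv_ne_zero (hxpos i).ne'))
    exact (h1.mul hUP).mul h2
  · intro i j
    rw [hBfac, hNfac, hBinv, hNinv, Matrix.mul_diagonal, Matrix.mul_diagonal,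
      Matrix.diagonal_mul, Matrix.diagonal_mul]
    have h1 := hent i j
    rw [← Matrix.nonsing_inv_eq_ringInverse, ← Matrix.nonsing_inv_eq_ringInverse] at h1
    rw [abs_mul, abs_mul, abs_of_pos (hxpos i), abs_of_pos (inv_pos.mpr (hypos j))]
    exact mul_le_mul_of_nonneg_right (mul_le_mul_of_nonneg_left h1 (hxpos i).le)
      (inv_nonneg.mpr (hypos j).le)

end core
end

section
/- Let M be an n×n real matrix and q ∈ ℝ^n. If z solves the linear complementarity problem z ≥ 0, Mz + q ≥ 0, zᵀ(Mz + q) = 0, then x := ((M - I)z + q)/2 satisfies the generalized absolute value equation (M + I)x - (M - I)|x| = q. -/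
open Matrix Filter

theorem stmt12 {n : ℕ} (M : Matrix (Fin n) (Fin n) ℝ) (q z x : Fin n → ℝ)
    (hz : ∀ i, 0 ≤ z i) (hw : ∀ i, 0 ≤ (M.mulVec z + q) i)
    (hc : z ⬝ᵥ (M.mulVec z + q) = 0)
    (hx : x = (2 : ℝ)⁻¹ • ((M - 1).mulVec z + q)) :
    (M + 1).mulVec x - (M - 1).mulVec (vabs x) = q := by
  set w := M.mulVec z + q with hwdef
  have hzw : ∀ i, z i * w i = 0 := fun i =>
    (Finset.sum_eq_zero_iff_of_nonneg (fun i _ => mul_nonneg (hz i) (hw i))).mp hc i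
      (Finset.mem_univ i)
  have hx' : x = (2 : ℝ)⁻¹ • (w - z) := by
    rw [hx]
    congr 1
    rw [Matrix.sub_mulVec, Matrix.one_mulVec, hwdef]
    funext i; simp; ring
  have habs : vabs x = (2 : ℝ)⁻¹ • (w + z) := by
    funext i
    have hxi : x i = (2 : ℝ)⁻¹ * (w i - z i) := by rw [hx']; simp
    have : |w i - z i| = w i + z i := by
      rcases mul_eq_zero.mp (hzw i) with h | h
      · rw [h]; rw [abs_of_nonneg (by simpa [h] using hw i)]; ring
      · rw [h]; rw [abs_of_nonpos (sub_nonpos.mpr (hz i))]; ring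
    simp [vabs, hxi, abs_mul, this]
  have hq : q = w - M.mulVec z := by rw [hwdef]; abel
  rw [habs, hx', Matrix.mulVec_smul, Matrix.mulVec_smul, Matrix.add_mulVec,
    Matrix.sub_mulVec, Matrix.one_mulVec, Matrix.mulVec_sub, Matrix.mulVec_add, hq]
  funext i
  simp [Matrix.mulVec_sub, Matrix.mulVec_add]
  ring
end
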